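/- For the function F(x) = x·cos²(x/2) − sin(x), there holds |F(x)| ≤ (1/12)(2π + 1)|x|³ for all real x with |x| ≤ 2π. -/

import Mathlib

open Real

lemma abs_sin_sub_mul_cos_le (t : ℝ) : |Real.sin t - t * Real.cos t| ≤ |t| ^ 3 := by
  have key : ∀ s ∈ Set.uIcc (0:ℝ) t,
      HasDerivWithinAt (fun s => Real.sin s - s * Real.cos s) (s * Real.sin s)
        (Set.uIcc (0:ℝ) t) s := by
    intro s _
    have h : HasDerivAt (fun s : ℝ => Real.sin s - s * Real.cos s)
        (Real.cos s - (1 * Real.cos s + s * (-Real.sin s))) s :=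
      (Real.hasDerivAt_sin s).sub ((hasDerivAt_id s).mul (Real.hasDerivAt_cos s))
    have := h.hasDerivWithinAt (s := Set.uIcc (0:ℝ) t)
    exact this.congr_deriv (by ring)
  have bound : ∀ s ∈ Set.uIcc (0:ℝ) t, ‖s * Real.sin s‖ ≤ t ^ 2 := by
    intro s hs
    have hst : |s| ≤ |t| := by
      rw [Set.uIcc_eq_union] at hs
      rcases hs with h | h <;> rw [abs_le] <;> constructor <;>
        cases' abs_cases t with ht ht <;> nlinarith [h.1, h.2]
    calc ‖s * Real.sin s‖ = |s| * |Real.sin s| := abs_mul _ _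
      _ ≤ |t| * |t| := by
          exact mul_le_mul hst ((Real.abs_sin_le_abs).trans hst) (abs_nonneg _) (abs_nonneg _)
      _ = t ^ 2 := by rw [← sq_abs]; ring
  have := Convex.norm_image_sub_le_of_norm_hasDerivWithin_le key bound
    (convex_uIcc 0 t) Set.left_mem_uIcc Set.right_mem_uIcc
  simp only [Real.sin_zero, Real.cos_zero, mul_one, mul_zero, zero_mul, sub_zero,
    Real.norm_eq_abs] at this
  calc |Real.sin t - t * Real.cos t| ≤ t ^ 2 * |t| := this
    _ = |t| ^ 3 := by rw [← sq_abs]; ring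

theorem abs_F_le (x : ℝ) (hx : |x| ≤ 2 * Real.pi) :
    |x * Real.cos (x / 2) ^ 2 - Real.sin x| ≤
      (1 / 12) * (2 * Real.pi + 1) * |x| ^ 3 := by
  have hsin : Real.sin x = 2 * Real.sin (x / 2) * Real.cos (x / 2) := by
    rw [← Real.sin_two_mul]; ring_nf
  have hfac : x * Real.cos (x / 2) ^ 2 - Real.sin x =
      Real.cos (x / 2) * (2 * ((x / 2) * Real.cos (x / 2) - Real.sin (x / 2))) := by
    rw [hsin]; ring
  have h1 : |x * Real.cos (x / 2) ^ 2 - Real.sin x| ≤ 2 * |x / 2| ^ 3 := by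
    rw [hfac, abs_mul]
    have hc : |Real.cos (x / 2)| ≤ 1 := Real.abs_cos_le_one _
    have h2 : |2 * ((x / 2) * Real.cos (x / 2) - Real.sin (x / 2))| ≤ 2 * |x / 2| ^ 3 := by
      rw [abs_mul, abs_two]
      have := abs_sin_sub_mul_cos_le (x / 2)
      rw [abs_sub_comm] at this
      linarith
    calc |Real.cos (x / 2)| * |2 * ((x / 2) * Real.cos (x / 2) - Real.sin (x / 2))|
        ≤ 1 * (2 * |x / 2| ^ 3) := mul_le_mul hc h2 (abs_nonneg _) (by linarith [abs_nonneg (Real.cos (x/2))])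
      _ = 2 * |x / 2| ^ 3 := one_mul _
  have hx2 : |x / 2| = |x| / 2 := by rw [abs_div]; norm_num
  rw [hx2] at h1
  have hpi : (2:ℝ) ≤ 2 * Real.pi := by nlinarith [Real.pi_gt_three]
  nlinarith [pow_nonneg (abs_nonneg x) 3, h1]
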